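/- Let G = (I, d, E, λ) be a compact graphing. For every positive integer t there is ε > 0 such that any two distinct points x, y ∈ I at graph distance at most t satisfy d(x,y) ≥ ε. -/

import Mathlib

open MeasureTheory

/-- The ball of graph radius `r` around `x` in the graph `G` (as a vertex set,
including `x` itself). -/
def gball {I : Type*} (G : I → I → Prop) (x : I) : ℕ → Set I
  | 0 => {x}
  | r + 1 => gball G x r ∪ {z | ∃ w ∈ gball G x r, G w z}

/-- An `r`-neighborhood isomorphism between `x` and `y`: a rooted isomorphism of the
graph balls `B(x,r) → B(y,r)` sending `x` to `y` (encoded as a global map that is a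
bijection between the balls preserving adjacency in both directions). -/
def IsNbhdIso {I : Type*} (G : I → I → Prop) (r : ℕ) (x y : I) (φ : I → I) : Prop :=
  φ x = y ∧ Set.BijOn φ (gball G x r) (gball G y r) ∧
    ∀ u ∈ gball G x r, ∀ v ∈ gball G x r, (G u v ↔ G (φ u) (φ v))

/-- The displacement `d₀(φ) = sup_{z ∈ B(x,r)} d₀(z, φ(z))` of a neighborhood map. -/
noncomputable def disp {I : Type*} [MetricSpace I] (G : I → I → Prop) (x : I) (r : ℕ)
    (φ : I → I) : ℝ :=
  ⨆ z : gball G x r, dist (z : I) (φ z)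

/-- The neighborhood-isomorphism metric
`d(x,y) = inf over r and r-neighborhood isomorphisms φ of max {1/(r+1), d₀(φ)}`. -/
noncomputable def nbhdDist {I : Type*} [MetricSpace I] (G : I → I → Prop) (x y : I) : ℝ :=
  sInf {m | ∃ (r : ℕ) (φ : I → I), IsNbhdIso G r x y φ ∧
    m = max (1 / ((r : ℝ) + 1)) (disp G x r φ)}

/-- `degIn G B x` is the number of neighbors of `x` in `B`. -/
noncomputable def degIn {I : Type*} (G : I → I → Prop) (B : Set I) (x : I) : ℕ :=
  {y | y ∈ B ∧ G x y}.ncard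

/-- The vertex set of the connected component of `x`. -/
def compSet {I : Type*} (G : I → I → Prop) (x : I) : Set I := {y | Relation.ReflTransGen G x y}

lemma gball_self_mem {I : Type*} (G : I → I → Prop) (x : I) : ∀ r : ℕ, x ∈ gball G x r
  | 0 => rfl
  | r + 1 => Or.inl (gball_self_mem G x r)

lemma gball_finite {I : Type*} (G : I → I → Prop) (hfin : ∀ x : I, {y | G x y}.Finite)
    (x : I) : ∀ r : ℕ, (gball G x r).Finite
  | 0 => Set.finite_singleton x
  | r + 1 => by
    have ih := gball_finite G hfin x r
    have h2 : {z | ∃ w ∈ gball G x r, G w z} = ⋃ w ∈ gball G x r, {z | G w z} := by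
      ext z; simp [Set.mem_iUnion]
    exact ih.union (h2 ▸ Set.Finite.biUnion ih (fun w _ => hfin w))

/-- in a compact graphing, for every `t` there is `ε > 0` such that distinct
points at graph distance at most `t` are at metric distance at least `ε`. -/
theorem stmt10 {I : Type*} [MetricSpace I] [CompactSpace I] [MeasurableSpace I] [BorelSpace I]
    (G : I → I → Prop) (hsym : Symmetric G) (hirr : Irreflexive G)
    (D : ℕ) (hfin : ∀ x : I, {y | G x y}.Finite) (hdeg : ∀ x : I, {y | G x y}.ncard ≤ D)
    (hclosed : IsClosed {p : I × I | G p.1 p.2})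
    (hC3 : ∀ ε > (0:ℝ), ∀ r : ℕ, ∃ δ > (0:ℝ), ∀ x y : I, dist x y ≤ δ →
      ∃ φ : I → I, IsNbhdIso G r x y φ ∧ ∀ z ∈ gball G x r, dist z (φ z) ≤ ε)
    (μ : Measure I) [IsProbabilityMeasure μ]
    (hMP : ∀ A B : Set I, MeasurableSet A → MeasurableSet B →
      ∫ x in A, (degIn G B x : ℝ) ∂μ = ∫ x in B, (degIn G A x : ℝ) ∂μ) :
    ∀ t : ℕ, 0 < t → ∃ ε > (0:ℝ), ∀ x y : I, x ≠ y → y ∈ gball G x t → ε ≤ dist x y := by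
  intro t _
  by_contra hcon
  push_neg at hcon
  -- extract a sequence of bad pairs with distance → 0
  have H : ∀ n : ℕ, ∃ p : I × I, p.1 ≠ p.2 ∧ p.2 ∈ gball G p.1 t ∧
      dist p.1 p.2 < 1 / ((n : ℝ) + 1) := by
    intro n
    obtain ⟨x, y, hne, hball, hlt⟩ := hcon (1 / ((n : ℝ) + 1)) (by positivity)
    exact ⟨(x, y), hne, hball, hlt⟩
  choose p hp1 hp2 hp3 using H
  -- convergent subsequence of the first coordinates
  obtain ⟨u, -, σ, hσ, hconv⟩ :=
    isCompact_univ.tendsto_subseq (x := fun n => (p n).1) (fun n => Set.mem_univ _)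
  -- the ball around the limit point is finite, hence u is separated from its other points
  have hSfin : ((gball G u t) \ {u}).Finite := (gball_finite G hfin u t).diff
  obtain ⟨η, hηpos, hη⟩ : ∃ η > (0:ℝ), ∀ v ∈ gball G u t, v ≠ u → η ≤ dist u v := by
    rcases Set.eq_empty_or_nonempty ((gball G u t) \ {u}) with hemp | hne
    · refine ⟨1, one_pos, fun v hv hvne => absurd ?_ (Set.notMem_empty v)⟩
      rw [← hemp]; exact ⟨hv, hvne⟩
    · obtain ⟨b, hb, hmin⟩ := Set.exists_min_image _ (fun v => dist u v) hSfin hne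
      refine ⟨dist u b, dist_pos.2 (fun h => hb.2 h.symm), fun v hv hvne => ?_⟩
      exact hmin v ⟨hv, hvne⟩
  -- apply (C3) with ε = η/4
  obtain ⟨δ, hδpos, hC⟩ := hC3 (η / 4) (by positivity) t
  -- pick a large index
  obtain ⟨N₁, hN₁⟩ := (Metric.tendsto_atTop.mp hconv) (min δ (η / 4))
    (lt_min hδpos (by positivity))
  obtain ⟨N₂, hN₂⟩ := exists_nat_one_div_lt (ε := η / 4) (by positivity)
  set n := σ (max N₁ N₂) with hn
  have hclose : dist ((p n).1) u < min δ (η / 4) := hN₁ (max N₁ N₂) (le_max_left _ _)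
  have hsmall : dist ((p n).1) ((p n).2) < η / 4 := by
    have h1 : (1 : ℝ) / ((n : ℝ) + 1) ≤ 1 / ((N₂ : ℝ) + 1) := by
      apply one_div_le_one_div_of_le (by positivity)
      have : (N₂ : ℕ) ≤ n := le_trans (le_max_right N₁ N₂) (hσ.le_apply)
      exact_mod_cast add_le_add_left (Nat.cast_le.mpr this) 1
    exact lt_of_lt_of_le (lt_of_lt_of_le (hp3 n) h1) (le_of_lt hN₂)
  -- the neighborhood isomorphism from (p n).1 to u
  obtain ⟨φ, ⟨hroot, hbij, -⟩, hdisp⟩ :=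
    hC ((p n).1) u (le_of_lt (lt_of_lt_of_le hclose (min_le_left _ _)))
  set v := φ ((p n).2) with hv
  have hvmem : v ∈ gball G u t := hbij.mapsTo (hp2 n)
  have hvne : v ≠ u := by
    intro h
    apply hp1 n
    exact hbij.injOn (gball_self_mem G _ t) (hp2 n) (by rw [hroot, ← h])
  -- contradiction: u is η-separated from v, but v is within 3η/4 of u
  have h1 : η ≤ dist u v := hη v hvmem hvne
  have h2 : dist u v ≤ dist u ((p n).1) + dist ((p n).1) ((p n).2) + dist ((p n).2) v :=
    dist_triangle4 u ((p n).1) ((p n).2) v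
  have h3 : dist u ((p n).1) < η / 4 := by
    rw [dist_comm]; exact lt_of_lt_of_le hclose (min_le_right _ _)
  have h4 : dist ((p n).2) v ≤ η / 4 := hdisp ((p n).2) (hp2 n)
  linarith
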